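/- Define an equivalence relation ∼ on monomials of K⟨x,y,z⟩ by cyclic permutation (u ∼ v iff u = w₁w₂ and v = w₂w₁), extended linearly to K⟨x,y,z⟩. Then for f₄' = α₁[x,y][x,z] + β₁[x,z][x,y], g₄' = α₂[x,y][y,z] + β₂[y,z][x,y], h₄' = α₃[x,z][y,z] + β₃[y,z][x,z], the sum of right Fox derivatives ∂_r f₄'/∂_r x + ∂_r g₄'/∂_r y + ∂_r h₄'/∂_r z is equivalent (under ∼) to (−α₁+β₁−α₂+β₂−α₃+β₃)(xyz − xzy). -/

import Mathlib

open FreeAlgebra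

noncomputable section

variable (K : Type*) [Field K]

local notation "x" => FreeAlgebra.ι K (0 : Fin 3)
local notation "y" => FreeAlgebra.ι K (1 : Fin 3)
local notation "z" => FreeAlgebra.ι K (2 : Fin 3)

/-- The monomial of K⟨x,y,z⟩ corresponding to a word in the free letters. -/
def mono (l : List (Fin 3)) : FreeAlgebra K (Fin 3) :=
  (l.map (FreeAlgebra.ι K)).prod

/-- The K-span of all differences of cyclically equivalent monomials. -/
def cycSpan : Submodule K (FreeAlgebra K (Fin 3)) :=
  Submodule.span K
    {p | ∃ u v : List (Fin 3), p = mono K (u ++ v) - mono K (v ++ u)}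

/-- Cyclic equivalence: two elements are equivalent iff their difference lies
in the span of differences of cyclically equivalent monomials. -/
def CyclicEquiv (f g : FreeAlgebra K (Fin 3)) : Prop := f - g ∈ cycSpan K

/-- `g` is the right Fox derivative of `f` with respect to the `i`-th variable. -/
def IsRightFoxDeriv (f : FreeAlgebra K (Fin 3)) (i : Fin 3)
    (g : FreeAlgebra K (Fin 3)) : Prop :=
  ∃ (c : Fin 3 → FreeAlgebra K (Fin 3)) (α : K),
    f = (∑ j : Fin 3, FreeAlgebra.ι K j * c j) + algebraMap K (FreeAlgebra K (Fin 3)) α ∧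
    c i = g

def dWord (i : Fin 3) (w : FreeMonoid (Fin 3)) : FreeAlgebra K (Fin 3) :=
  match FreeMonoid.toList w with
  | [] => 0
  | j :: rest => if j = i then mono K rest else 0

def D (i : Fin 3) : FreeAlgebra K (Fin 3) →ₗ[K] FreeAlgebra K (Fin 3) :=
  ((Finsupp.lsum K fun w : FreeMonoid (Fin 3) =>
      LinearMap.toSpanSingleton K _ (dWord K i w)).comp
    ((MonoidAlgebra.coeffLinearEquiv K).toLinearMap.comp (equivMonoidAlgebraFreeMonoid (R := K) (X := Fin 3)).toLinearMap) : _)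

lemma E_mono (l : List (Fin 3)) :
    equivMonoidAlgebraFreeMonoid (mono K l)
      = MonoidAlgebra.single (FreeMonoid.ofList l) (1 : K) := by
  induction l with
  | nil => simp [mono]; rfl
  | cons a l ih =>
      have h1 : mono K (a :: l) = FreeAlgebra.ι K a * mono K l := by simp [mono]
      have ha : equivMonoidAlgebraFreeMonoid (FreeAlgebra.ι K a)
          = MonoidAlgebra.single (FreeMonoid.of a) (1 : K) := by
        simp [equivMonoidAlgebraFreeMonoid]
      rw [h1, map_mul, ih, ha]
      show MonoidAlgebra.single _ _ * MonoidAlgebra.single _ _ = _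
      rw [MonoidAlgebra.single_mul_single, one_mul]
      rfl

lemma D_mono (i : Fin 3) (l : List (Fin 3)) :
    D K i (mono K l) = dWord K i (FreeMonoid.ofList l) := by
  have h : ((MonoidAlgebra.coeffLinearEquiv K).toLinearMap.comp
      equivMonoidAlgebraFreeMonoid.toLinearMap) (mono K l)
      = Finsupp.single (FreeMonoid.ofList l) (1 : K) := by
    rw [LinearMap.comp_apply]; erw [E_mono K l]; rfl
  rw [D, LinearMap.comp_apply]; erw [h]
  rw [Finsupp.lsum_apply, Finsupp.sum_single_index (by simp)]
  simp [LinearMap.toSpanSingleton]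

lemma span_mono : Submodule.span K (Set.range (mono K)) = ⊤ := by
  rw [eq_top_iff]
  rintro a -
  have ha : a = equivMonoidAlgebraFreeMonoid.symm (equivMonoidAlgebraFreeMonoid a) := by simp
  rw [ha]
  generalize (equivMonoidAlgebraFreeMonoid a :
    MonoidAlgebra K (FreeMonoid (Fin 3))) = p
  induction p using MonoidAlgebra.induction_linear with
  | zero => simp
  | add f g hf hg => rw [map_add]; exact Submodule.add_mem _ hf hg
  | single w k =>
      have h1 : (MonoidAlgebra.single w k : MonoidAlgebra K (FreeMonoid (Fin 3)))
          = k • MonoidAlgebra.single w (1:K) := by rw [MonoidAlgebra.smul_single, smul_eq_mul, mul_one]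
      rw [show (MonoidAlgebra.single w k : MonoidAlgebra K (FreeMonoid (Fin 3)))
        = k • (MonoidAlgebra.single w (1:K) : MonoidAlgebra K (FreeMonoid (Fin 3))) from h1, map_smul]
      refine Submodule.smul_mem _ _ (Submodule.subset_span ?_)
      refine ⟨FreeMonoid.toList w, ?_⟩
      rw [AlgEquiv.eq_symm_apply]
      exact E_mono K (FreeMonoid.toList w)

lemma D_iota_mul (i j : Fin 3) (c : FreeAlgebra K (Fin 3)) :
    D K i (FreeAlgebra.ι K j * c) = if j = i then c else 0 := by
  have h : ∀ a ∈ Submodule.span K (Set.range (mono K)),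
      D K i (FreeAlgebra.ι K j * a) = if j = i then a else 0 := by
    intro a haa
    induction haa using Submodule.span_induction with
    | mem xx hx =>
        obtain ⟨l, rfl⟩ := hx
        rw [show FreeAlgebra.ι K j * mono K l = mono K (j :: l) from by simp [mono], D_mono]
        rfl
    | zero => simp
    | add u v _ _ hu hv => rw [mul_add, map_add, hu, hv]; split_ifs <;> simp
    | smul k u _ hu => rw [mul_smul_comm, map_smul, hu]; split_ifs <;> simp
  exact h c (by rw [span_mono]; trivial)

lemma D_const (i : Fin 3) (α : K) :
    D K i (algebraMap K (FreeAlgebra K (Fin 3)) α) = 0 := by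
  have h : algebraMap K (FreeAlgebra K (Fin 3)) α = α • mono K [] := by
    simp [mono, Algebra.algebraMap_eq_smul_one]
  rw [h, map_smul, D_mono]
  show α • (0 : FreeAlgebra K (Fin 3)) = 0
  simp


lemma fox_eq (f g : FreeAlgebra K (Fin 3)) (i : Fin 3) (h : IsRightFoxDeriv K f i g) :
    g = D K i f := by
  obtain ⟨c, α, hc, hg⟩ := h
  rw [hc, ← hg]
  fin_cases i <;>
    simp [Fin.sum_univ_three, D_iota_mul, D_const]

/-- For f₄' = α₁[x,y][x,z] + β₁[x,z][x,y], g₄' = α₂[x,y][y,z] + β₂[y,z][x,y],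
h₄' = α₃[x,z][y,z] + β₃[y,z][x,z], the sum of right Fox derivatives
∂_r f₄'/∂_r x + ∂_r g₄'/∂_r y + ∂_r h₄'/∂_r z is cyclically equivalent to
(−α₁+β₁−α₂+β₂−α₃+β₃)(xyz − xzy). -/
theorem stmt_11 (α₁ β₁ α₂ β₂ α₃ β₃ : K)
    (fx gy hz : FreeAlgebra K (Fin 3))
    (hf : IsRightFoxDeriv K
      (α₁ • ((x * y - y * x) * (x * z - z * x)) +
        β₁ • ((x * z - z * x) * (x * y - y * x))) 0 fx)
    (hg : IsRightFoxDeriv K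
      (α₂ • ((x * y - y * x) * (y * z - z * y)) +
        β₂ • ((y * z - z * y) * (x * y - y * x))) 1 gy)
    (hh : IsRightFoxDeriv K
      (α₃ • ((x * z - z * x) * (y * z - z * y)) +
        β₃ • ((y * z - z * y) * (x * z - z * x))) 2 hz) :
    CyclicEquiv K (fx + gy + hz)
      ((-α₁ + β₁ - α₂ + β₂ - α₃ + β₃) • (x * y * z - x * z * y)) := by
  have hfx := fox_eq K _ _ _ hf
  have hgy := fox_eq K _ _ _ hg
  have hhz := fox_eq K _ _ _ hh
  simp only [map_add, map_smul, mul_sub, sub_mul, mul_assoc, map_sub, D_iota_mul] at hfx hgy hhz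
  norm_num [show (2:Fin 3) ≠ 0 from by decide, show (2:Fin 3) ≠ 1 from by decide,
    show (0:Fin 3) ≠ 2 from by decide, show (1:Fin 3) ≠ 2 from by decide] at hfx hgy hhz
  show _ - _ ∈ cycSpan K
  have m1 : mono K ([1,2]++[0]) - mono K ([0]++[1,2]) ∈ cycSpan K :=
    Submodule.subset_span ⟨[1,2],[0],rfl⟩
  have m2 : mono K ([2]++[0,1]) - mono K ([0,1]++[2]) ∈ cycSpan K :=
    Submodule.subset_span ⟨[2],[0,1],rfl⟩
  have m3 : mono K ([1]++[0,2]) - mono K ([0,2]++[1]) ∈ cycSpan K :=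
    Submodule.subset_span ⟨[1],[0,2],rfl⟩
  have m4 : mono K ([2,1]++[0]) - mono K ([0]++[2,1]) ∈ cycSpan K :=
    Submodule.subset_span ⟨[2,1],[0],rfl⟩
  have key : fx + gy + hz -
      (-α₁ + β₁ - α₂ + β₂ - α₃ + β₃) • (x * y * z - x * z * y) =
      (-α₁+β₃) • (mono K ([1,2]++[0]) - mono K ([0]++[1,2])) +
      (β₁+β₂) • (mono K ([2]++[0,1]) - mono K ([0,1]++[2])) +
      (α₁-β₃) • (mono K ([1]++[0,2]) - mono K ([0,2]++[1])) +
      (-β₁-β₂) • (mono K ([2,1]++[0]) - mono K ([0]++[2,1])) := by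
    rw [hfx, hgy, hhz]
    simp only [mono, List.cons_append, List.nil_append, List.map_cons, List.map_nil,
      List.prod_cons, List.prod_nil, mul_one, mul_assoc]
    module
  rw [key]
  exact add_mem (add_mem (add_mem (Submodule.smul_mem _ _ m1) (Submodule.smul_mem _ _ m2))
    (Submodule.smul_mem _ _ m3)) (Submodule.smul_mem _ _ m4)

end
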